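/- Let θ be a real algebraic function, analytic on an interval (a, ∞), such that θ(n) is an integer for all sufficiently large integers n. Then θ is a polynomial with rational coefficients. -/

import Mathlib

open Polynomial Filter Set

noncomputable section AuxAlgebraicIntegerValued

/-- `Q ∈ (ℝ[X])[Y]` annihilates `f` on `(a, ∞)`. -/
def AnnRel (a : ℝ) (f : ℝ → ℝ) (Q : Polynomial (Polynomial ℝ)) : Prop :=
  ∀ x : ℝ, a < x → Polynomial.eval₂ (Polynomial.evalRingHom x) (f x) Q = 0

def AlgOn (a : ℝ) (f : ℝ → ℝ) : Prop := ∃ Q, Q ≠ 0 ∧ AnnRel a f Q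

def Dfun (f : ℝ → ℝ) : ℝ → ℝ := fun x => f (x + 1) - f x
def Dseq (s : ℕ → ℝ) : ℕ → ℝ := fun n => s (n + 1) - s n

lemma poly_eq_zero_of_forall_gt {a : ℝ} {c : Polynomial ℝ}
    (h : ∀ x : ℝ, a < x → c.eval x = 0) : c = 0 := by
  apply Polynomial.eq_zero_of_infinite_isRoot
  exact Set.Infinite.mono (fun x hx => h x hx) (Set.Ioi_infinite a)

lemma algOn_of_mv (a : ℝ) (θ : ℝ → ℝ) (P : MvPolynomial (Fin 2) ℝ) (hP : P ≠ 0)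
    (halg : ∀ x > a, MvPolynomial.eval (fun k : Fin 2 => if k = 0 then x else θ x) P = 0) :
    AlgOn a θ := by
  classical
  set Φ : MvPolynomial (Fin 2) ℝ →ₐ[ℝ] Polynomial (Polynomial ℝ) :=
    MvPolynomial.aeval (fun i : Fin 2 =>
      if i = 0 then (Polynomial.C Polynomial.X : Polynomial (Polynomial ℝ)) else Polynomial.X)
    with hΦ
  have hinj : Function.Injective Φ := by
    set f₀ : Polynomial ℝ →ₐ[ℝ] MvPolynomial (Fin 2) ℝ :=
      Polynomial.aeval (MvPolynomial.X 0) with hf₀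
    set Ψ : Polynomial (Polynomial ℝ) →ₐ[ℝ] MvPolynomial (Fin 2) ℝ :=
      Polynomial.aevalTower f₀ (MvPolynomial.X 1) with hΨ
    have hcomp : Ψ.comp Φ = AlgHom.id ℝ _ := by
      apply MvPolynomial.algHom_ext
      intro i
      fin_cases i <;> simp [hΦ, hΨ, hf₀]
    intro p q hpq
    have := congrArg Ψ hpq
    simpa using (congrArg (fun g => g p) hcomp).symm.trans
      ((congrArg Ψ hpq).trans (congrArg (fun g => g q) hcomp))
  refine ⟨Φ P, fun h0 => hP (hinj (by simpa using h0)), ?_⟩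
  intro x hx
  have key : (Polynomial.eval₂RingHom (Polynomial.evalRingHom x) (θ x)).comp Φ.toRingHom =
      (MvPolynomial.eval (fun k : Fin 2 => if k = 0 then x else θ x)) := by
    apply MvPolynomial.ringHom_ext
    · intro r; simp [hΦ]
    · intro i; fin_cases i <;> simp [hΦ]
  have := congrArg (fun g : MvPolynomial (Fin 2) ℝ →+* ℝ => g P) key
  simpa using this.trans (halg x hx)


lemma comp_linear_ne_zero {c u : Polynomial ℝ} (hc : c ≠ 0) (hu : u.natDegree = 1) :
    c.comp u ≠ 0 := by
  have h := Polynomial.leadingCoeff_comp (p := c) (q := u) (by rw [hu]; exact one_ne_zero)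
  intro h0
  rw [h0, Polynomial.leadingCoeff_zero] at h
  have : c.leadingCoeff ≠ 0 := Polynomial.leadingCoeff_ne_zero.mpr hc
  have : u.leadingCoeff ≠ 0 := Polynomial.leadingCoeff_ne_zero.mpr (fun h' => by
    simp [h'] at hu)
  exact (mul_ne_zero ‹c.leadingCoeff ≠ 0› (pow_ne_zero _ this)) h.symm

lemma algOn_shift {a : ℝ} {f : ℝ → ℝ} (h : AlgOn a f) : AlgOn a (fun x => f (x + 1)) := by
  obtain ⟨Q, hQ, hrel⟩ := h
  set σ : Polynomial ℝ →+* Polynomial ℝ :=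
    Polynomial.eval₂RingHom Polynomial.C (Polynomial.X + Polynomial.C 1) with hσ
  have hσc : ∀ c : Polynomial ℝ, σ c = c.comp (Polynomial.X + Polynomial.C 1) := fun c => rfl
  have hσinj : Function.Injective σ := by
    intro c d hcd
    have : (c - d).comp (Polynomial.X + Polynomial.C 1) = 0 := by
      rw [Polynomial.sub_comp, ← hσc, ← hσc, hcd, sub_self]
    by_contra hne
    exact comp_linear_ne_zero (sub_ne_zero.mpr (fun h' => hne (by rw [h']))) (by
      simpa using Polynomial.natDegree_X_add_C (1 : ℝ)) this
  refine ⟨Q.map σ, fun h0 => hQ (by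
    exact (Polynomial.map_eq_zero_iff hσinj).mp h0), ?_⟩
  intro x hx
  rw [Polynomial.eval₂_map]
  have hhom : (Polynomial.evalRingHom x).comp σ = Polynomial.evalRingHom (x + 1) := by
    apply RingHom.ext; intro c
    simp [hσc, Polynomial.eval_comp]
  rw [hhom]
  exact hrel (x + 1) (by linarith)

section SubClosure

variable (a : ℝ)

abbrev FF (a : ℝ) : Type := (Set.Ioi a) → ℝ

def evF : Polynomial ℝ →+* FF a := Pi.ringHom (fun x => Polynomial.evalRingHom x.1)

instance algFF : Algebra (Polynomial ℝ) (FF a) := (evF a).toAlgebra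

def emF (f : ℝ → ℝ) : FF a := fun x => f x.1

lemma aeval_emF (f : ℝ → ℝ) (Q : Polynomial (Polynomial ℝ)) (x : Set.Ioi a) :
    (Polynomial.aeval (emF a f) Q : FF a) x
      = Polynomial.eval₂ (Polynomial.evalRingHom x.1) (f x.1) Q := by
  have : (Pi.evalRingHom (fun _ : Set.Ioi a => ℝ) x) (Polynomial.aeval (emF a f) Q)
      = Polynomial.eval₂ ((Pi.evalRingHom (fun _ : Set.Ioi a => ℝ) x).comp
          (algebraMap (Polynomial ℝ) (FF a))) (f x.1) Q := by
    rw [Polynomial.aeval_def, Polynomial.hom_eval₂]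
    rfl
  exact this

lemma isAlgebraic_of_algOn {f : ℝ → ℝ} (h : AlgOn a f) :
    IsAlgebraic (Polynomial ℝ) (emF a f) := by
  obtain ⟨Q, hQ, hrel⟩ := h
  refine ⟨Q, hQ, ?_⟩
  funext x
  rw [aeval_emF]
  exact hrel x.1 x.2

lemma algOn_of_isAlgebraic {f : ℝ → ℝ} (h : IsAlgebraic (Polynomial ℝ) (emF a f)) :
    AlgOn a f := by
  obtain ⟨Q, hQ, hrel⟩ := h
  refine ⟨Q, hQ, fun x hx => ?_⟩
  rw [← aeval_emF a f Q ⟨x, hx⟩, hrel]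
  rfl

lemma evF_inj : ∀ c : Polynomial ℝ, algebraMap (Polynomial ℝ) (FF a) c = 0 → c = 0 := by
  intro c hc
  apply Polynomial.eq_zero_of_infinite_isRoot
  apply Set.Infinite.mono (s := Set.Ioi a) ?_ (Set.Ioi_infinite a)
  intro x hx
  have := congrFun hc ⟨x, hx⟩
  exact this

instance : Nontrivial (FF a) := by
  haveI : Inhabited (Set.Ioi a) := ⟨⟨a + 1, by simp⟩⟩
  exact Pi.nontrivial

lemma algOn_sub {a : ℝ} {f g : ℝ → ℝ} (hf : AlgOn a f) (hg : AlgOn a g) :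
    AlgOn a (fun x => f x - g x) := by
  apply algOn_of_isAlgebraic
  have hf' := isAlgebraic_of_algOn a hf
  have hg' := isAlgebraic_of_algOn a hg
  obtain ⟨df, hdf, hxf⟩ := hf'.exists_integral_multiple
  obtain ⟨dg, hdg, hxg⟩ := hg'.exists_integral_multiple
  have hint : IsIntegral (Polynomial ℝ) (algebraMap (Polynomial ℝ) (FF a) (df * dg)
      * (emF a f - emF a g)) := by
    have h1 : IsIntegral (Polynomial ℝ) (algebraMap (Polynomial ℝ) (FF a) df * emF a f) :=
      by rw [← Algebra.smul_def]; exact hxf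
    have h2 : IsIntegral (Polynomial ℝ) (algebraMap (Polynomial ℝ) (FF a) dg * emF a g) :=
      by rw [← Algebra.smul_def]; exact hxg
    have e : algebraMap (Polynomial ℝ) (FF a) (df * dg) * (emF a f - emF a g)
        = algebraMap (Polynomial ℝ) (FF a) dg * (algebraMap (Polynomial ℝ) (FF a) df * emF a f)
          - algebraMap (Polynomial ℝ) (FF a) df * (algebraMap (Polynomial ℝ) (FF a) dg * emF a g) := by
      rw [map_mul]; ring
    rw [e]
    exact (( isIntegral_algebraMap (x := dg)).mul h1).sub ((isIntegral_algebraMap (x := df)).mul h2)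
  obtain ⟨m, hm, hm0⟩ := hint
  have hD : df * dg ≠ 0 := mul_ne_zero hdf hdg
  have hmd : m.natDegree ≠ 0 := by
    intro h0
    have : m = 1 := (Polynomial.Monic.natDegree_eq_zero hm).mp h0
    rw [this] at hm0
    simp at hm0
  set Q : Polynomial (Polynomial ℝ) := m.comp (Polynomial.C (df * dg) * Polynomial.X) with hQdef
  have hemsub : emF a (fun x => f x - g x) = emF a f - emF a g := rfl
  refine ⟨Q, ?_, ?_⟩
  · have h := Polynomial.leadingCoeff_comp (p := m)
      (q := Polynomial.C (df * dg) * Polynomial.X)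
      (by rw [Polynomial.natDegree_C_mul_X _ hD]; exact one_ne_zero)
    intro h0
    rw [hQdef] at h0
    rw [h0, Polynomial.leadingCoeff_zero] at h
    have : (Polynomial.C (df * dg) * Polynomial.X : Polynomial (Polynomial ℝ)).leadingCoeff
        = df * dg := by simp [Polynomial.leadingCoeff_C_mul_X]
    rw [this, hm.leadingCoeff, one_mul] at h
    exact pow_ne_zero _ hD h.symm
  · rw [hemsub, hQdef, Polynomial.aeval_comp]
    have : (Polynomial.aeval (emF a f - emF a g)) (Polynomial.C (df * dg) * Polynomial.X)
        = algebraMap (Polynomial ℝ) (FF a) (df * dg) * (emF a f - emF a g) := by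
      simp
    rw [this]
    exact hm0

end SubClosure

lemma poly_eval_bound (p : Polynomial ℝ) :
    ∃ B : ℝ, 0 < B ∧ ∀ x : ℝ, 1 ≤ x → |p.eval x| ≤ B * x ^ p.natDegree := by
  refine ⟨(∑ i ∈ Finset.range (p.natDegree + 1), |p.coeff i|) + 1, by positivity, ?_⟩
  intro x hx
  have hx0 : (0:ℝ) < x := lt_of_lt_of_le one_pos hx
  rw [Polynomial.eval_eq_sum_range]
  calc |∑ i ∈ Finset.range (p.natDegree + 1), p.coeff i * x ^ i|
      ≤ ∑ i ∈ Finset.range (p.natDegree + 1), |p.coeff i * x ^ i| :=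
        Finset.abs_sum_le_sum_abs _ _
    _ ≤ ∑ i ∈ Finset.range (p.natDegree + 1), |p.coeff i| * x ^ p.natDegree := by
        apply Finset.sum_le_sum
        intro i hi
        rw [abs_mul, abs_pow, abs_of_pos hx0]
        exact mul_le_mul_of_nonneg_left
          (pow_le_pow_right₀ hx (Nat.lt_succ_iff.mp (Finset.mem_range.mp hi))) (abs_nonneg _)
    _ = (∑ i ∈ Finset.range (p.natDegree + 1), |p.coeff i|) * x ^ p.natDegree := by
        rw [Finset.sum_mul]
    _ ≤ _ := by
        have : (0:ℝ) < x ^ p.natDegree := by positivity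
        nlinarith [this]

lemma algOn_growth {a : ℝ} {f : ℝ → ℝ} (h : AlgOn a f) :
    ∃ (C : ℝ) (M : ℕ) (x₀ : ℝ), 0 < C ∧ ∀ x : ℝ, x₀ ≤ x → |f x| ≤ C * x ^ M := by
  classical
  obtain ⟨Q, hQ, hrel⟩ := h
  set d := Q.natDegree with hd
  have hdpos : 0 < d := by
    rcases Nat.eq_zero_or_pos d with h0 | h
    · exfalso
      have hQC : Q = Polynomial.C (Q.coeff 0) := Polynomial.eq_C_of_natDegree_eq_zero h0
      have hz : Q.coeff 0 = 0 := by
        apply poly_eq_zero_of_forall_gt (a := a)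
        intro x hx
        have h2 := hrel x hx
        rw [hQC, Polynomial.eval₂_C] at h2
        simpa using h2
      exact hQ (by rw [hQC, hz, map_zero])
    · exact h
  have hcd : Q.leadingCoeff ≠ 0 := Polynomial.leadingCoeff_ne_zero.mpr hQ
  -- lower bound for |leadingCoeff eval|
  have hlow : ∃ (m₀ : ℝ) (x₁ : ℝ), 0 < m₀ ∧ ∀ x : ℝ, x₁ ≤ x → m₀ ≤ |Q.leadingCoeff.eval x| := by
    rcases Nat.eq_zero_or_pos Q.leadingCoeff.natDegree with h0 | hpos
    · refine ⟨|Q.leadingCoeff.coeff 0|, 0, ?_, ?_⟩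
      · have : Q.leadingCoeff = Polynomial.C (Q.leadingCoeff.coeff 0) :=
          Polynomial.eq_C_of_natDegree_eq_zero h0
        rw [abs_pos]
        intro hz
        exact hcd (by rw [this, hz, map_zero])
      · intro x _
        conv_rhs => rw [Polynomial.eq_C_of_natDegree_eq_zero h0]
        simp
    · have := Polynomial.abs_tendsto_atTop Q.leadingCoeff
        (Polynomial.natDegree_pos_iff_degree_pos.mp hpos)
      have hev := this.eventually_ge_atTop 1
      rw [Filter.eventually_atTop] at hev
      obtain ⟨x₁, hx₁⟩ := hev
      exact ⟨1, x₁, one_pos, fun x hx => hx₁ x hx⟩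
  obtain ⟨m₀, x₁, hm₀, hx₁⟩ := hlow
  choose B hB1 hB2 using fun i : ℕ => poly_eval_bound (Q.coeff i)
  set M := Finset.sup (Finset.range d) (fun i => (Q.coeff i).natDegree) with hM
  set SB := ∑ i ∈ Finset.range d, B i with hSB
  have hSBpos : 0 < SB := Finset.sum_pos (fun i _ => hB1 i) (by
    simpa using Finset.nonempty_range_iff.mpr (by omega))
  set C := SB / m₀ + 1 with hC
  have hCpos : 0 < C := by positivity
  refine ⟨C, M, max (max x₁ 1) (a + 1), hCpos, ?_⟩
  intro x hx
  have hxx₁ : x₁ ≤ x := le_trans (le_max_left _ _) (le_trans (le_max_left _ _) hx)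
  have hx1 : (1:ℝ) ≤ x := le_trans (le_max_right _ _) (le_trans (le_max_left _ _) hx)
  have hxa : a < x := lt_of_lt_of_le (by linarith) (le_trans (le_max_right _ _) hx)
  have hxM : (1:ℝ) ≤ x ^ M := one_le_pow₀ hx1
  -- sum bound
  have hS : ∑ i ∈ Finset.range d, |(Q.coeff i).eval x| ≤ SB * x ^ M := by
    rw [hSB, Finset.sum_mul]
    apply Finset.sum_le_sum
    intro i hi
    calc |(Q.coeff i).eval x| ≤ B i * x ^ (Q.coeff i).natDegree := hB2 i x hx1
      _ ≤ B i * x ^ M := by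
          apply mul_le_mul_of_nonneg_left _ (le_of_lt (hB1 i))
          exact pow_le_pow_right₀ hx1 (Finset.le_sup (f := fun i => (Q.coeff i).natDegree) hi)
  -- main estimate
  have key : |f x| ≤ max 1 (SB * x ^ M / m₀) := by
    rcases le_or_gt (|f x|) 1 with h1 | h1
    · exact le_trans h1 (le_max_left _ _)
    · apply le_trans _ (le_max_right _ _)
      set y := f x with hy
      have h0 := hrel x hxa
      rw [Polynomial.eval₂_eq_sum_range] at h0
      rw [Finset.sum_range_succ] at h0
      have hco : Q.coeff d = Q.leadingCoeff := rfl
      have heq : (Polynomial.evalRingHom x) (Q.coeff d) * y ^ d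
          = -∑ i ∈ Finset.range d, (Polynomial.evalRingHom x) (Q.coeff i) * y ^ i := by
        linarith [h0]
      have habs : |Q.leadingCoeff.eval x| * |y| ^ d
          ≤ (∑ i ∈ Finset.range d, |(Q.coeff i).eval x|) * |y| ^ (d - 1) := by
        have := congrArg abs heq
        rw [abs_neg, abs_mul, abs_pow] at this
        calc |Q.leadingCoeff.eval x| * |y| ^ d
            = |∑ i ∈ Finset.range d, (Polynomial.evalRingHom x) (Q.coeff i) * y ^ i| := by
              rw [← this]; rfl
          _ ≤ ∑ i ∈ Finset.range d, |(Q.coeff i).eval x| * |y| ^ i := by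
              refine le_trans (Finset.abs_sum_le_sum_abs _ _) ?_
              apply Finset.sum_le_sum
              intro i _
              rw [abs_mul, abs_pow]
              rfl
          _ ≤ ∑ i ∈ Finset.range d, |(Q.coeff i).eval x| * |y| ^ (d-1) := by
              apply Finset.sum_le_sum
              intro i hi
              apply mul_le_mul_of_nonneg_left _ (abs_nonneg _)
              exact pow_le_pow_right₀ (le_of_lt h1)
                (Nat.le_sub_one_of_lt (Finset.mem_range.mp hi))
          _ = _ := by rw [Finset.sum_mul]
      have hyd : |y| ^ d = |y| * |y| ^ (d - 1) := by
        rw [← pow_succ']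
        congr 1
        omega
      have hpow : (0:ℝ) < |y| ^ (d - 1) := by positivity
      have hstep : |Q.leadingCoeff.eval x| * |y| ≤ ∑ i ∈ Finset.range d, |(Q.coeff i).eval x| := by
        rw [hyd, ← mul_assoc] at habs
        exact le_of_mul_le_mul_right habs hpow
      have hm : m₀ * |y| ≤ SB * x ^ M := by
        calc m₀ * |y| ≤ |Q.leadingCoeff.eval x| * |y| :=
              mul_le_mul_of_nonneg_right (hx₁ x hxx₁) (abs_nonneg _)
          _ ≤ _ := le_trans hstep hS
      rw [le_div_iff₀ hm₀]
      linarith [hm]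
  calc |f x| ≤ max 1 (SB * x ^ M / m₀) := key
    _ ≤ C * x ^ M := by
        apply max_le
        · calc (1:ℝ) ≤ x ^ M := hxM
            _ ≤ C * x ^ M := le_mul_of_one_le_left (by positivity)
              (by rw [hC]; linarith [div_pos hSBpos hm₀])
        · have hdiv : SB * x ^ M / m₀ = (SB / m₀) * x ^ M := by ring
          rw [hdiv]
          apply mul_le_mul_of_nonneg_right _ (by positivity)
          rw [hC]; linarith

lemma finite_bad (Q : Polynomial (Polynomial ℝ)) (hQ : Q ≠ 0) :
    {c : ℝ | Q.eval (Polynomial.C c) = 0}.Finite := by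
  classical
  set i := Q.natDegree with hi
  set j := (Q.coeff i).natDegree with hj
  have hci : Q.coeff i ≠ 0 := Polynomial.leadingCoeff_ne_zero.mpr hQ
  have hcij : (Q.coeff i).coeff j ≠ 0 := Polynomial.leadingCoeff_ne_zero.mpr hci
  set pj : Polynomial ℝ :=
    ∑ k ∈ Q.support, Polynomial.C ((Q.coeff k).coeff j) * Polynomial.X ^ k with hpj
  have hpjcoeff : ∀ n, pj.coeff n = if n ∈ Q.support then (Q.coeff n).coeff j else 0 := by
    intro n
    rw [hpj, Polynomial.finset_sum_coeff]
    rw [Finset.sum_congr rfl (fun k _ => by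
      rw [Polynomial.coeff_C_mul, Polynomial.coeff_X_pow, mul_ite, mul_one, mul_zero])]
    rw [Finset.sum_ite_eq Q.support n (fun k => (Q.coeff k).coeff j)]
  have hpjne : pj ≠ 0 := by
    intro h0
    have := hpjcoeff i
    rw [h0] at this
    simp only [Polynomial.coeff_zero] at this
    rw [if_pos (Polynomial.mem_support_iff.mpr hci)] at this
    exact hcij this.symm
  have hpjeval : ∀ c : ℝ, pj.eval c = (Q.eval (Polynomial.C c)).coeff j := by
    intro c
    rw [hpj, Polynomial.eval_finset_sum]
    have hRHS : Q.eval (Polynomial.C c)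
        = ∑ k ∈ Q.support, Q.coeff k * Polynomial.C (c ^ k) := by
      rw [Polynomial.eval_eq_sum, Polynomial.sum_def]
      exact Finset.sum_congr rfl (fun k _ => by rw [← Polynomial.C_pow])
    rw [hRHS, Polynomial.finset_sum_coeff]
    exact Finset.sum_congr rfl (fun k _ => by
      rw [Polynomial.coeff_mul_C, Polynomial.eval_mul, Polynomial.eval_C,
        Polynomial.eval_pow, Polynomial.eval_X])
  apply Set.Finite.subset (Polynomial.finite_setOf_isRoot hpjne)
  intro c hc
  simp only [Set.mem_setOf_eq] at hc ⊢
  show pj.IsRoot c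
  rw [Polynomial.IsRoot, hpjeval c, hc]
  simp

lemma level_finite {a : ℝ} {f : ℝ → ℝ} {Q : Polynomial (Polynomial ℝ)}
    (hrel : AnnRel a f Q) {c : ℝ} (hc : Q.eval (Polynomial.C c) ≠ 0) :
    {x : ℝ | a < x ∧ f x = c}.Finite := by
  apply Set.Finite.subset (Polynomial.finite_setOf_isRoot hc)
  intro x hx
  obtain ⟨hax, hfx⟩ := hx
  have h0 := hrel x hax
  rw [hfx] at h0
  show (Q.eval (Polynomial.C c)).eval x = 0
  have := Polynomial.eval₂_at_apply (Polynomial.evalRingHom x) (Polynomial.C c) (p := Q)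
  simp only [Polynomial.coe_evalRingHom, Polynomial.eval_C] at this
  rw [← this] at *
  exact h0

lemma sign_eventually {a : ℝ} {f : ℝ → ℝ} (hcont : ContinuousOn f (Set.Ioi a)) {c : ℝ}
    (hfin : {x : ℝ | a < x ∧ f x = c}.Finite) :
    (∀ᶠ x in atTop, f x ≤ c) ∨ (∀ᶠ x in atTop, c ≤ f x) := by
  obtain ⟨R₀, hR₀⟩ := hfin.bddAbove
  set R := max R₀ a with hR
  have hnolevel : ∀ x : ℝ, R < x → f x ≠ c := by
    intro x hx hfx
    have hax : a < x := lt_of_le_of_lt (le_max_right _ _) hx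
    have := hR₀ ⟨hax, hfx⟩
    exact absurd (lt_of_le_of_lt (le_trans this (le_max_left _ _)) hx) (lt_irrefl x)
  by_contra hcon
  push_neg at hcon
  obtain ⟨h1, h2⟩ := hcon
  obtain ⟨x₁, hx₁R, hx₁⟩ := (Filter.frequently_atTop.mp h1) (R + 1)
  obtain ⟨x₂, hx₂R, hx₂⟩ := (Filter.frequently_atTop.mp h2) (R + 1)
  -- f x₁ > c, f x₂ < c, both > R
  set u := min x₁ x₂
  set v := max x₁ x₂
  have huv : u ≤ v := min_le_max
  have hu : R < u := lt_of_lt_of_le (by linarith) (le_min hx₁R hx₂R)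
  have hsub : Set.Icc u v ⊆ Set.Ioi a := by
    intro y hy
    exact lt_of_le_of_lt (le_max_right R₀ a) (lt_of_lt_of_le hu hy.1)
  have hcont' : ContinuousOn f (Set.Icc u v) := hcont.mono hsub
  have hmem : c ∈ Set.Icc (f u) (f v) ∪ Set.Icc (f v) (f u) := by
    rcases le_total x₁ x₂ with h | h
    · have hu' : u = x₁ := min_eq_left h
      have hv' : v = x₂ := max_eq_right h
      right; rw [hu', hv']
      exact ⟨le_of_lt hx₂, le_of_lt hx₁⟩
    · have hu' : u = x₂ := min_eq_right h
      have hv' : v = x₁ := max_eq_left h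
      left; rw [hu', hv']
      exact ⟨le_of_lt hx₂, le_of_lt hx₁⟩
  have : ∃ y ∈ Set.Icc u v, f y = c := by
    rcases hmem with hm | hm
    · obtain ⟨y, hy, hfy⟩ := intermediate_value_Icc huv hcont' hm
      exact ⟨y, hy, hfy⟩
    · obtain ⟨y, hy, hfy⟩ := intermediate_value_Icc' huv hcont' hm
      exact ⟨y, hy, hfy⟩
  obtain ⟨y, hy, hfy⟩ := this
  exact hnolevel y (lt_of_lt_of_le hu hy.1) hfy

lemma algOn_dichotomy {a : ℝ} {f : ℝ → ℝ} (h : AlgOn a f)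
    (hcont : ContinuousOn f (Set.Ioi a)) :
    Filter.Tendsto f atTop (nhds 0) ∨ (∃ c > 0, ∀ᶠ x in atTop, c ≤ f x)
      ∨ (∃ c > 0, ∀ᶠ x in atTop, f x ≤ -c) := by
  obtain ⟨Q, hQ, hrel⟩ := h
  by_cases h2 : ∃ c > 0, ∀ᶠ x in atTop, c ≤ f x
  · exact Or.inr (Or.inl h2)
  by_cases h3 : ∃ c > 0, ∀ᶠ x in atTop, f x ≤ -c
  · exact Or.inr (Or.inr h3)
  left
  push_neg at h2 h3
  rw [Metric.tendsto_atTop]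
  intro ε hε
  have hbad := finite_bad Q hQ
  -- pick good levels in (0, ε) and (-ε, 0)
  have hgood : ∀ (s : Set ℝ), s.Infinite →
      ∃ c ∈ s, Q.eval (Polynomial.C c) ≠ 0 := by
    intro s hs
    obtain ⟨c, hcs, hcb⟩ := (hs.diff hbad).nonempty
    exact ⟨c, hcs, hcb⟩
  obtain ⟨c, hcmem, hcgood⟩ := hgood (Set.Ioo 0 ε) (Set.Ioo_infinite hε)
  obtain ⟨c', hcmem', hcgood'⟩ := hgood (Set.Ioo (-ε) 0) (Set.Ioo_infinite (by linarith))
  have hupper : ∀ᶠ x in atTop, f x ≤ c := by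
    rcases sign_eventually hcont (level_finite hrel hcgood) with h | h
    · exact h
    · exfalso
      obtain ⟨x₀, hx₀⟩ := Filter.eventually_atTop.mp h
      exact absurd (Filter.eventually_atTop.mpr ⟨x₀, hx₀⟩)
        (by have := h2 c hcmem.1; exact Filter.not_eventually.mpr (this.mono fun x hx => not_le.mpr hx))
  have hlower : ∀ᶠ x in atTop, c' ≤ f x := by
    rcases sign_eventually hcont (level_finite hrel hcgood') with h | h
    · exfalso
      have hc'pos : (0:ℝ) < -c' := by linarith [hcmem'.2]
      apply Filter.not_eventually.mpr ((h3 (-c') hc'pos).mono fun x hx => not_le.mpr hx)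
      filter_upwards [h] with x hx
      linarith [hx]
    · exact h
  obtain ⟨N, hN⟩ := Filter.eventually_atTop.mp (hupper.and hlower)
  refine ⟨N, fun x hx => ?_⟩
  obtain ⟨hux, hlx⟩ := hN x hx
  rw [Real.dist_eq, sub_zero, abs_lt]
  constructor
  · linarith [hcmem'.1]
  · linarith [hcmem.2]

lemma iter_cast (K : ℕ) : ∀ (f : ℝ → ℝ) (n : ℕ),
    (Dfun^[K] f) n = (Dseq^[K] (fun m : ℕ => f m)) n := by
  induction K with
  | zero => intro f n; rfl
  | succ K ih =>
    intro f n
    rw [Function.iterate_succ_apply, Function.iterate_succ_apply]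
    rw [ih (Dfun f) n]
    have he : (fun m : ℕ => Dfun f m) = Dseq (fun m : ℕ => f m) := by
      funext m
      simp only [Dfun, Dseq]
      push_cast
      ring_nf
    rw [he]

lemma Dseq_int (K : ℕ) : ∀ (s : ℕ → ℝ) (N : ℕ), (∀ n, N ≤ n → ∃ m : ℤ, s n = m) →
    ∀ n, N ≤ n → ∃ m : ℤ, Dseq^[K] s n = m := by
  induction K with
  | zero => intro s N h n hn; exact h n hn
  | succ K ih =>
    intro s N h n hn
    rw [Function.iterate_succ_apply]
    apply ih (Dseq s) N _ n hn
    intro m hm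
    obtain ⟨m₁, hm₁⟩ := h (m+1) (by omega)
    obtain ⟨m₂, hm₂⟩ := h m hm
    exact ⟨m₁ - m₂, by rw [Dseq, hm₁, hm₂]; push_cast; ring⟩

lemma Dseq_neg (K : ℕ) : ∀ (s : ℕ → ℝ) (n : ℕ),
    Dseq^[K] (fun m => -(s m)) n = -(Dseq^[K] s n) := by
  induction K with
  | zero => intro s n; rfl
  | succ K ih =>
    intro s n
    rw [Function.iterate_succ_apply, Function.iterate_succ_apply]
    have : Dseq (fun m => -(s m)) = fun m => -(Dseq s m) := by
      funext m; simp [Dseq]; ring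
    rw [this, ih]

lemma Dseq_grow (K : ℕ) : ∀ (s : ℕ → ℝ) (c : ℝ), 0 < c → ∀ (N : ℕ),
    (∀ n, N ≤ n → c ≤ Dseq^[K] s n) →
    ∃ c' > (0:ℝ), ∃ N' : ℕ, ∀ n, N' ≤ n → c' * (n:ℝ) ^ K ≤ s n := by
  induction K with
  | zero =>
    intro s c hc N h
    exact ⟨c, hc, N, fun n hn => by simpa using h n hn⟩
  | succ K ih =>
    intro s c hc N h
    have h' : ∀ n, N ≤ n → c ≤ Dseq^[K] (Dseq s) n := by
      intro n hn
      have := h n hn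
      rwa [Function.iterate_succ_apply] at this
    obtain ⟨c', hc', N', hN'⟩ := ih (Dseq s) c hc N h'
    have htel : ∀ n, N' ≤ n → s n = s N' + ∑ m ∈ Finset.Ico N' n, Dseq s m := by
      intro n hn
      induction n with
      | zero =>
        have : N' = 0 := Nat.le_zero.mp hn
        simp [this]
      | succ n ihn =>
        rcases Nat.lt_or_ge n N' with hlt | hge
        · have : N' = n + 1 := by omega
          simp [this]
        · rw [Finset.sum_Ico_succ_top hge, ← add_assoc, ← ihn hge]
          simp [Dseq]
    set c'' : ℝ := c' / 4 ^ (K + 1) with hc''def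
    have hc''pos : 0 < c'' := by positivity
    have hsum : ∀ n : ℕ, 2 * N' + 4 ≤ n →
        c'' * (n:ℝ) ^ (K + 1) ≤ ∑ m ∈ Finset.Ico N' n, Dseq s m := by
      intro n hn
      have hhalf : N' ≤ n / 2 := by omega
      have hq : ((n:ℝ)/4) ≤ ((n/2 : ℕ) : ℝ) := by
        have h1 : n ≤ 4 * (n/2) := by omega
        have : (n:ℝ) ≤ 4 * ((n/2 : ℕ):ℝ) := by exact_mod_cast h1
        linarith
      have hq2 : ((n:ℝ)/4) ≤ (n:ℝ) - ((n/2 : ℕ) : ℝ) := by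
        have h1 : 4 * (n/2) ≤ 3 * n := by omega
        have : 4 * ((n/2:ℕ):ℝ) ≤ 3 * (n:ℝ) := by exact_mod_cast h1
        linarith
      have hnpos : (0:ℝ) < n := by
        have h4 : (4:ℕ) ≤ n := by omega
        exact_mod_cast lt_of_lt_of_le (by norm_num) h4
      have hsplit : ∑ m ∈ Finset.Ico N' n, Dseq s m
          = ∑ m ∈ Finset.Ico N' (n/2), Dseq s m + ∑ m ∈ Finset.Ico (n/2) n, Dseq s m :=
        (Finset.sum_Ico_consecutive _ hhalf (by omega)).symm
      have hpos1 : (0:ℝ) ≤ ∑ m ∈ Finset.Ico N' (n/2), Dseq s m := by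
        apply Finset.sum_nonneg
        intro m hm
        have hm' := (Finset.mem_Ico.mp hm).1
        calc (0:ℝ) ≤ c' * (m:ℝ) ^ K := by positivity
          _ ≤ Dseq s m := hN' m hm'
      have hpos2 : ((n:ℝ) - (n/2 : ℕ)) * (c' * ((n/2 : ℕ):ℝ) ^ K)
          ≤ ∑ m ∈ Finset.Ico (n/2) n, Dseq s m := by
        have hcard : (Finset.Ico (n/2) n).card = n - n/2 := Nat.card_Ico _ _
        calc ((n:ℝ) - (n/2:ℕ)) * (c' * ((n/2:ℕ):ℝ) ^ K)
            = ((n - n/2 : ℕ) : ℝ) * (c' * ((n/2:ℕ):ℝ) ^ K) := by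
              rw [Nat.cast_sub (by omega : n/2 ≤ n)]
          _ = ∑ _m ∈ Finset.Ico (n/2) n, (c' * ((n/2:ℕ):ℝ) ^ K) := by
              rw [Finset.sum_const, hcard, nsmul_eq_mul]
          _ ≤ ∑ m ∈ Finset.Ico (n/2) n, Dseq s m := by
              apply Finset.sum_le_sum
              intro m hm
              obtain ⟨hm1, hm2⟩ := Finset.mem_Ico.mp hm
              calc c' * ((n/2:ℕ):ℝ) ^ K ≤ c' * (m:ℝ) ^ K := by
                    apply mul_le_mul_of_nonneg_left _ (le_of_lt hc')
                    exact pow_le_pow_left₀ (by positivity) (by exact_mod_cast hm1) K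
                _ ≤ Dseq s m := hN' m (le_trans hhalf hm1)
      have hkey : c'' * (n:ℝ) ^ (K + 1)
          ≤ ((n:ℝ) - (n/2 : ℕ)) * (c' * ((n/2 : ℕ):ℝ) ^ K) := by
        have e1 : c'' * (n:ℝ) ^ (K+1) = ((n:ℝ)/4) * (c' * ((n:ℝ)/4) ^ K) := by
          rw [hc''def, div_pow]
          field_simp
          ring
        rw [e1]
        have hB : c' * ((n:ℝ)/4) ^ K ≤ c' * ((n/2:ℕ):ℝ) ^ K :=
          mul_le_mul_of_nonneg_left (pow_le_pow_left₀ (by positivity) hq K) (le_of_lt hc')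
        have hBnn : (0:ℝ) ≤ c' * ((n:ℝ)/4) ^ K := by positivity
        have hA2nn : (0:ℝ) ≤ (n:ℝ) - ((n/2:ℕ):ℝ) := by
          have : ((n/2:ℕ):ℝ) ≤ (n:ℝ) := by exact_mod_cast Nat.div_le_self n 2
          linarith
        exact mul_le_mul hq2 hB hBnn hA2nn
      rw [hsplit]
      linarith [hpos1, hpos2, hkey]
    -- absorb the constant s N'
    refine ⟨c'' / 2, by positivity, max (2 * N' + 4) (Nat.ceil (|s N'| / (c''/2)) + 1), ?_⟩
    intro n hn
    have hn1 : 2 * N' + 4 ≤ n := le_trans (le_max_left _ _) hn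
    have hn2 : Nat.ceil (|s N'| / (c''/2)) + 1 ≤ n := le_trans (le_max_right _ _) hn
    have hcast : |s N'| / (c''/2) ≤ (n:ℝ) := by
      calc |s N'| / (c''/2) ≤ (Nat.ceil (|s N'| / (c''/2)) : ℝ) := Nat.le_ceil _
        _ ≤ (n:ℝ) := by exact_mod_cast le_trans (Nat.le_succ _) hn2
    have habs : |s N'| ≤ (c''/2) * (n:ℝ) := by
      rw [div_le_iff₀ (by positivity)] at hcast
      linarith [hcast]
    have hn1' : (1:ℝ) ≤ (n:ℝ) := by
      have : (1:ℕ) ≤ n := by omega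
      exact_mod_cast this
    have hpow : (n:ℝ) ≤ (n:ℝ) ^ (K+1) := by
      calc (n:ℝ) = (n:ℝ)^1 := (pow_one _).symm
        _ ≤ (n:ℝ)^(K+1) := pow_le_pow_right₀ hn1' (by omega)
    have hs := hsum n hn1
    have := htel n (by omega)
    have hfin : c'' / 2 * (n:ℝ)^(K+1) ≤ s N' + c'' * (n:ℝ)^(K+1) := by
      have h1 : (c''/2) * (n:ℝ) ≤ (c''/2) * (n:ℝ)^(K+1) :=
        mul_le_mul_of_nonneg_left hpow (by positivity)
      have h2 : -s N' ≤ |s N'| := neg_le_abs _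
      nlinarith [habs, h1, h2]
    rw [this]
    linarith [hs, hfin]

lemma keyg (m : ℕ) (hm : 1 ≤ m) :
    ((Polynomial.X + 1 : Polynomial ℚ) ^ m - Polynomial.X ^ m).natDegree = m - 1 ∧
    ((Polynomial.X + 1 : Polynomial ℚ) ^ m - Polynomial.X ^ m).leadingCoeff = (m : ℚ) := by
  classical
  set g : Polynomial ℚ := (Polynomial.X + 1) ^ m - Polynomial.X ^ m with hg
  have hexp : g = ∑ k ∈ Finset.range m, Polynomial.C ((m.choose k : ℚ)) * Polynomial.X ^ k := by
    rw [hg, add_pow]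
    rw [Finset.sum_range_succ]
    simp only [Nat.choose_self, Nat.cast_one, one_pow, mul_one, Nat.sub_self, pow_zero]
    rw [add_sub_cancel_right]
    apply Finset.sum_congr rfl
    intro k hk
    rw [← Polynomial.C_eq_natCast, mul_comm]
  have hcoeff : ∀ n : ℕ, g.coeff n = if n ∈ Finset.range m then (m.choose n : ℚ) else 0 := by
    intro n
    rw [hexp, Polynomial.finset_sum_coeff]
    rw [Finset.sum_congr rfl (fun k _ => by
      rw [Polynomial.coeff_C_mul, Polynomial.coeff_X_pow, mul_ite, mul_one, mul_zero])]
    rw [Finset.sum_ite_eq (Finset.range m) n (fun k => (m.choose k : ℚ))]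
  have hctop : g.coeff (m - 1) = (m : ℚ) := by
    rw [hcoeff]
    rw [if_pos (Finset.mem_range.mpr (by omega))]
    have : m.choose (m-1) = m := by
      have h1 : m - (m-1) = 1 := by omega
      have := Nat.choose_symm (Nat.sub_le m 1)
      rw [h1, Nat.choose_one_right] at this
      exact this.symm
    rw [this]
  have hmQ : (m : ℚ) ≠ 0 := by exact_mod_cast (by omega : m ≠ 0)
  have hle : g.natDegree ≤ m - 1 := by
    rw [hexp]
    apply Polynomial.natDegree_sum_le_of_forall_le
    intro k hk
    apply le_trans (Polynomial.natDegree_mul_le)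
    simp only [Polynomial.natDegree_C, Polynomial.natDegree_pow, Polynomial.natDegree_X, zero_add,
      mul_one]
    have := Finset.mem_range.mp hk
    omega
  have hge : m - 1 ≤ g.natDegree := Polynomial.le_natDegree_of_ne_zero (by rw [hctop]; exact hmQ)
  have hnd : g.natDegree = m - 1 := le_antisymm hle hge
  exact ⟨hnd, by rw [Polynomial.leadingCoeff, hnd, hctop]⟩

lemma antidiff : ∀ (d : ℕ) (p : Polynomial ℚ), p.natDegree ≤ d →
    ∃ q : Polynomial ℚ, ∀ t : ℚ, q.eval (t + 1) - q.eval t = p.eval t := by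
  intro d
  induction d with
  | zero =>
    intro p hp
    have hC : p = Polynomial.C (p.coeff 0) :=
      Polynomial.eq_C_of_natDegree_eq_zero (Nat.le_zero.mp hp)
    refine ⟨Polynomial.C (p.coeff 0) * Polynomial.X, fun t => ?_⟩
    rw [hC]
    simp
    ring
  | succ d ih =>
    intro p hp
    by_cases hd : p.natDegree ≤ d
    · exact ih p hd
    have hpd : p.natDegree = d + 1 := by omega
    have hpne : p ≠ 0 := fun h0 => by simp [h0] at hpd
    set m := d + 2 with hm
    set c := p.leadingCoeff with hc
    have hcne : c ≠ 0 := Polynomial.leadingCoeff_ne_zero.mpr hpne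
    set g : Polynomial ℚ := (Polynomial.X + 1) ^ m - Polynomial.X ^ m with hgdef
    obtain ⟨hgnd, hglc⟩ := keyg m (by omega)
    rw [← hgdef] at hgnd hglc
    have hmne : ((m:ℚ)) ≠ 0 := by exact_mod_cast (by omega : m ≠ 0)
    set g' : Polynomial ℚ := Polynomial.C (c / m) * g with hg'
    have hg'ne : g' ≠ 0 := by
      apply mul_ne_zero
      · simpa using div_ne_zero hcne hmne
      · intro h0
        rw [h0] at hglc
        simp only [Polynomial.leadingCoeff_zero] at hglc
        exact hmne hglc.symm
    have hg'nd : g'.natDegree = d + 1 := by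
      rw [hg', Polynomial.natDegree_C_mul (div_ne_zero hcne hmne), hgnd]
      omega
    have hg'lc : g'.leadingCoeff = c := by
      rw [hg', Polynomial.leadingCoeff_mul, Polynomial.leadingCoeff_C, hglc]
      field_simp
    -- q₀ := C (c/m) * X ^ m  has difference eval equal to g'
    set q₀ : Polynomial ℚ := Polynomial.C (c / m) * Polynomial.X ^ m with hq₀
    have hq₀eval : ∀ t : ℚ, q₀.eval (t + 1) - q₀.eval t = g'.eval t := by
      intro t
      rw [hq₀, hg', hgdef]
      simp
      ring
    set r := p - g' with hr
    rcases eq_or_ne r 0 with hr0 | hrne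
    · refine ⟨q₀, fun t => ?_⟩
      have : p = g' := by rw [← sub_eq_zero]; exact hr0
      rw [hq₀eval t, this]
    · have hdeg : r.degree < p.degree := by
        apply Polynomial.degree_sub_lt _ hpne
        · rw [hg'lc]
        · rw [Polynomial.degree_eq_natDegree hpne, Polynomial.degree_eq_natDegree hg'ne,
            hpd, hg'nd]
      have hrnd : r.natDegree ≤ d := by
        have := Polynomial.natDegree_lt_natDegree hrne hdeg
        omega
      obtain ⟨q₁, hq₁⟩ := ih r hrnd
      refine ⟨q₀ + q₁, fun t => ?_⟩
      have h1 := hq₀eval t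
      have h2 := hq₁ t
      have h3 : Polynomial.eval t r = Polynomial.eval t p - Polynomial.eval t g' := by
        rw [hr]; simp
      rw [h3] at h2
      simp only [Polynomial.eval_add]
      linarith [h1, h2]

lemma eval_map_rat (p : Polynomial ℚ) (r : ℚ) :
    (p.map (algebraMap ℚ ℝ)).eval (r : ℝ) = ((p.eval r : ℚ) : ℝ) := by
  rw [Polynomial.eval_map]
  have := Polynomial.eval₂_at_apply (algebraMap ℚ ℝ) r (p := p)
  simpa using this

lemma poly_of_Dseq_zero : ∀ (K : ℕ) (s : ℕ → ℝ) (N : ℕ),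
    (∀ n, N ≤ n → ∃ m : ℚ, s n = m) → (∀ n, N ≤ n → Dseq^[K] s n = 0) →
    ∃ p : Polynomial ℚ, ∀ n, N ≤ n → s n = (p.map (algebraMap ℚ ℝ)).eval (n : ℝ) := by
  intro K
  induction K with
  | zero =>
    intro s N _ hz
    exact ⟨0, fun n hn => by simpa using hz n hn⟩
  | succ K ih =>
    intro s N hrat hz
    have hz' : ∀ n, N ≤ n → Dseq^[K] (Dseq s) n = 0 := by
      intro n hn
      have := hz n hn
      rwa [Function.iterate_succ_apply] at this
    have hrat' : ∀ n, N ≤ n → ∃ m : ℚ, Dseq s n = m := by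
      intro n hn
      obtain ⟨m₁, hm₁⟩ := hrat (n+1) (by omega)
      obtain ⟨m₂, hm₂⟩ := hrat n hn
      exact ⟨m₁ - m₂, by rw [Dseq, hm₁, hm₂]; push_cast; ring⟩
    obtain ⟨p₁, hp₁⟩ := ih (Dseq s) N hrat' hz'
    obtain ⟨p₂, hp₂⟩ := antidiff p₁.natDegree p₁ le_rfl
    -- e n := s n - p₂~(n) is eventually constant
    set f := algebraMap ℚ ℝ
    set e : ℕ → ℝ := fun n => s n - (p₂.map f).eval (n : ℝ) with he
    have hestep : ∀ n, N ≤ n → e (n + 1) = e n := by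
      intro n hn
      have h1 : Dseq s n = (p₁.map f).eval (n:ℝ) := hp₁ n hn
      have h2 : (p₂.map f).eval ((n:ℝ) + 1) - (p₂.map f).eval (n:ℝ)
          = (p₁.map f).eval (n:ℝ) := by
        have hq := hp₂ (n : ℚ)
        have c1 : ((n:ℚ):ℝ) = (n:ℝ) := by push_cast; rfl
        have c2 : (((n:ℚ) + 1 :ℚ):ℝ) = (n:ℝ) + 1 := by push_cast; ring
        calc (p₂.map f).eval ((n:ℝ) + 1) - (p₂.map f).eval (n:ℝ)
            = (p₂.map f).eval ((((n:ℚ)+1 : ℚ)):ℝ) - (p₂.map f).eval (((n:ℚ):ℚ):ℝ) := by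
              rw [c2, c1]
          _ = ((p₂.eval ((n:ℚ)+1) : ℚ):ℝ) - ((p₂.eval (n:ℚ) : ℚ):ℝ) := by
              rw [eval_map_rat, eval_map_rat]
          _ = ((p₂.eval ((n:ℚ)+1) - p₂.eval (n:ℚ) : ℚ) : ℝ) := by push_cast; ring
          _ = ((p₁.eval (n:ℚ) : ℚ) : ℝ) := by rw [hq]
          _ = (p₁.map f).eval (n:ℝ) := by rw [← c1, eval_map_rat]
      have : e (n+1) - e n = Dseq s n - ((p₂.map f).eval ((n:ℝ)+1) - (p₂.map f).eval (n:ℝ)) := by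
        rw [he]
        simp only [Dseq]
        push_cast
        ring
      rw [h1, h2, sub_self] at this
      linarith [this]
    have hconst : ∀ n, N ≤ n → e n = e N := by
      intro n hn
      induction n, hn using Nat.le_induction with
      | base => rfl
      | succ n hn ihn => rw [hestep n hn, ihn]
    obtain ⟨rN, hrN⟩ := hrat N le_rfl
    have heN : e N = ((rN - p₂.eval (N:ℚ) : ℚ) : ℝ) := by
      rw [he]
      simp only
      rw [hrN]
      have c1 : ((N:ℚ):ℝ) = (N:ℝ) := by push_cast; rfl
      rw [← c1, eval_map_rat]
      push_cast
      ring
    refine ⟨p₂ + Polynomial.C (rN - p₂.eval (N:ℚ)), fun n hn => ?_⟩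
    rw [Polynomial.map_add, Polynomial.eval_add, Polynomial.map_C, Polynomial.eval_C]
    have := hconst n hn
    rw [heN] at this
    rw [he] at this
    simp only at this
    have : s n = (p₂.map f).eval (n:ℝ) + ((rN - p₂.eval (N:ℚ) : ℚ) : ℝ) := by linarith [this]
    rw [this]
    rfl

lemma endgame (a : ℝ) (h : ℝ → ℝ) (han : AnalyticOnNhd ℝ h (Set.Ioi a)) (N₁ : ℕ)
    (haN : a < N₁) (hz : ∀ n : ℕ, N₁ ≤ n → h n = 0) :
    ∀ d : ℕ, ∀ Q : Polynomial (Polynomial ℝ), Q.natDegree ≤ d → Q ≠ 0 → AnnRel a h Q →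
      Set.EqOn h 0 (Set.Ioi a) := by
  have hq0 : ∀ Q : Polynomial (Polynomial ℝ), AnnRel a h Q → Q.coeff 0 = 0 := by
    intro Q hrel
    apply Polynomial.eq_zero_of_infinite_isRoot
    apply Set.infinite_of_injective_forall_mem (f := fun k : ℕ => ((N₁ + k : ℕ) : ℝ))
    · intro k l hkl
      have : (N₁ + k : ℕ) = N₁ + l := Nat.cast_injective hkl
      omega
    · intro k
      have hax : a < ((N₁ + k : ℕ) : ℝ) := by
        calc a < (N₁ : ℝ) := haN
          _ ≤ ((N₁ + k : ℕ) : ℝ) := by exact_mod_cast Nat.le_add_right N₁ k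
      have h0 := hrel _ hax
      rw [hz (N₁ + k) (Nat.le_add_right _ _)] at h0
      rw [Polynomial.eval₂_at_zero] at h0
      exact h0
  intro d
  induction d with
  | zero =>
    intro Q hQd hQ hrel
    exfalso
    have hC : Q = Polynomial.C (Q.coeff 0) :=
      Polynomial.eq_C_of_natDegree_eq_zero (Nat.le_zero.mp hQd)
    exact hQ (by rw [hC, hq0 Q hrel, map_zero])
  | succ d ih =>
    intro Q hQd hQ hrel
    by_cases hvan : ∃ x₀ ∈ Set.Ioi a, h =ᶠ[nhds x₀] 0
    · obtain ⟨x₀, hx₀, hev⟩ := hvan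
      exact han.eqOn_zero_of_preconnected_of_eventuallyEq_zero (isPreconnected_Ioi) hx₀ hev
    · push_neg at hvan
      obtain ⟨R, hQR⟩ := Polynomial.X_dvd_iff.mpr (hq0 Q hrel)
      have hRne : R ≠ 0 := fun h0 => hQ (by rw [hQR, h0, mul_zero])
      have hRd : R.natDegree ≤ d := by
        have := Polynomial.natDegree_mul (Polynomial.X_ne_zero) hRne
        rw [← hQR, Polynomial.natDegree_X] at this
        omega
      set G : ℝ → ℝ := fun y => Polynomial.eval₂ (Polynomial.evalRingHom y) (h y) R with hG
      have hcontG : ContinuousOn G (Set.Ioi a) := by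
        have hGe : G = fun y =>
            ∑ i ∈ Finset.range (R.natDegree + 1), (R.coeff i).eval y * (h y) ^ i := by
          funext y
          show Polynomial.eval₂ (Polynomial.evalRingHom y) (h y) R = _
          rw [Polynomial.eval₂_eq_sum_range]
          rfl
        rw [hGe]
        apply continuousOn_finset_sum
        intro i _
        exact ((Polynomial.continuous _).continuousOn.mul ((han.continuousOn).pow i))
      have hrelR : AnnRel a h R := by
        intro x hx
        have hprod : h x * G x = 0 := by
          have := hrel x hx
          rw [hQR, Polynomial.eval₂_mul, Polynomial.eval₂_X] at this
          exact this
        rcases eq_or_ne (h x) 0 with hh | hh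
        · -- continuity + density argument
          have hmem : Set.Ioi a ∈ nhds x := isOpen_Ioi.mem_nhds hx
          have hfreq : ∃ᶠ y in nhds x, h y ≠ 0 := Filter.not_eventually.mp (hvan x hx)
          have hfreq2 : ∃ᶠ y in nhds x, G y = 0 := by
            apply (hfreq.and_eventually (Filter.eventually_of_mem hmem (fun y hy => hy))).mono
            rintro y ⟨hy1, hy2⟩
            have hp : h y * G y = 0 := by
              have := hrel y hy2
              rw [hQR, Polynomial.eval₂_mul, Polynomial.eval₂_X] at this
              exact this
            rcases mul_eq_zero.mp hp with h' | h'
            · exact absurd h' hy1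
            · exact h'
          have hGx : G x = 0 := by
            have hca : ContinuousAt G x := hcontG.continuousAt hmem
            exact tendsto_nhds_unique_of_frequently_eq hca tendsto_const_nhds
              (hfreq2.mono fun y hy => hy)
          exact hGx
        · rcases mul_eq_zero.mp hprod with h' | h'
          · exact absurd h' hh
          · exact h'
      exact ih R hRd hRne hrelR


lemma algOn_iter {a : ℝ} {f : ℝ → ℝ} (h : AlgOn a f) (K : ℕ) : AlgOn a (Dfun^[K] f) := by
  induction K with
  | zero => exact h
  | succ K ih =>
    rw [Function.iterate_succ']
    exact algOn_sub (algOn_shift ih) ih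

lemma contOn_iter {a : ℝ} {f : ℝ → ℝ} (h : ContinuousOn f (Set.Ioi a)) (K : ℕ) :
    ContinuousOn (Dfun^[K] f) (Set.Ioi a) := by
  induction K with
  | zero => exact h
  | succ K ih =>
    rw [Function.iterate_succ']
    apply ContinuousOn.sub
    · apply ContinuousOn.comp ih (Continuous.continuousOn (by continuity))
      intro x hx
      simp only [Set.mem_Ioi] at *
      linarith
    · exact ih

/-- A real algebraic function θ, analytic on (a,∞), taking integer values at
    all sufficiently large integers, is a polynomial with rational coefficients. -/
theorem algebraic_integer_valued_is_polynomial (a : ℝ) (θ : ℝ → ℝ)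
    (hθ : AnalyticOn ℝ θ (Set.Ioi a))
    (P : MvPolynomial (Fin 2) ℝ) (hP : P ≠ 0)
    (halg : ∀ x > a, MvPolynomial.eval (fun k : Fin 2 => if k = 0 then x else θ x) P = 0)
    (hint : ∃ N : ℕ, ∀ n : ℕ, N ≤ n → (a < n) → ∃ m : ℤ, θ n = m) :
    ∃ q : Polynomial ℚ, ∀ x > a, θ x = (q.map (algebraMap ℚ ℝ)).eval x := by
  classical
  obtain ⟨N, hN⟩ := hint
  obtain ⟨n₀, hn₀⟩ := exists_nat_gt a
  set N₂ := max N n₀ with hN₂def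
  have hN₂a : a < (N₂ : ℝ) := lt_of_lt_of_le hn₀ (by exact_mod_cast le_max_right N n₀)
  set s : ℕ → ℝ := fun n => θ n with hs
  have hint₂ : ∀ n, N₂ ≤ n → ∃ m : ℤ, s n = m := by
    intro n hn
    apply hN n (le_trans (le_max_left _ _) hn)
    calc a < (N₂ : ℝ) := hN₂a
      _ ≤ (n : ℝ) := by exact_mod_cast hn
  have halgθ : AlgOn a θ := algOn_of_mv a θ P hP halg
  obtain ⟨C, M, x₀, hC, hgrow⟩ := algOn_growth halgθ
  set K := M + 1 with hK
  have halgφ : AlgOn a (Dfun^[K] θ) := algOn_iter halgθ K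
  have hcontθ : ContinuousOn θ (Set.Ioi a) := hθ.continuousOn
  have hcontφ : ContinuousOn (Dfun^[K] θ) (Set.Ioi a) := contOn_iter hcontθ K
  -- growth of s at integer points
  have hsb : ∀ᶠ n in (atTop : Filter ℕ), |s n| ≤ C * (n:ℝ) ^ M := by
    filter_upwards [Filter.eventually_ge_atTop (Nat.ceil x₀)] with n hn
    exact hgrow (n : ℝ) (le_trans (Nat.le_ceil x₀) (by exact_mod_cast hn))
  -- a general contradiction from an eventual positive lower bound on the K-th difference
  have contra : ∀ (t : ℕ → ℝ), (∀ᶠ n in (atTop : Filter ℕ), |t n| ≤ C * (n:ℝ) ^ M) →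
      ∀ c > (0:ℝ), ¬ (∀ᶠ n in (atTop : Filter ℕ), c ≤ Dseq^[K] t n) := by
    intro t htb c hc hev
    obtain ⟨N₃, hN₃⟩ := Filter.eventually_atTop.mp hev
    obtain ⟨c', hc', N', hN'⟩ := Dseq_grow K t c hc N₃ hN₃
    have hten : Filter.Tendsto (fun n : ℕ => c' * (n:ℝ)) atTop atTop :=
      Filter.Tendsto.const_mul_atTop hc' (tendsto_natCast_atTop_atTop (R := ℝ))
    have hev2 := hten.eventually_gt_atTop C
    have hev3 : ∀ᶠ n in (atTop : Filter ℕ), (1:ℝ) ≤ Nat.cast n := by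
      filter_upwards [Filter.eventually_ge_atTop 1] with n hn
      exact_mod_cast hn
    obtain ⟨n, ⟨hn1, hn2⟩, hn3, hn4⟩ :=
      ((htb.and hev2).and (hev3.and (Filter.eventually_ge_atTop N'))).exists
    have hpow : (0:ℝ) < (n:ℝ) ^ M := by positivity
    have hlow := hN' n hn4
    have : c' * (n:ℝ) ^ K = (c' * (n:ℝ)) * (n:ℝ) ^ M := by
      rw [hK, pow_succ]
      ring
    nlinarith [hlow, hn1, hn2, abs_nonneg (t n), le_abs_self (t n), hpow]
  rcases algOn_dichotomy halgφ hcontφ with h0 | hpos | hneg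
  · -- φ → 0 : the K-th differences vanish eventually
    have h0' : Filter.Tendsto (fun n : ℕ => Dseq^[K] s n) atTop (nhds 0) := by
      have := h0.comp (tendsto_natCast_atTop_atTop (R := ℝ))
      apply this.congr
      intro n
      exact iter_cast K θ n
    obtain ⟨N₄, hN₄⟩ := (Metric.tendsto_atTop.mp h0') 1 one_pos
    set N₅ := max N₄ N₂ with hN₅def
    have hzero : ∀ n, N₅ ≤ n → Dseq^[K] s n = 0 := by
      intro n hn
      obtain ⟨m, hm⟩ := Dseq_int K s N₂ hint₂ n (le_trans (le_max_right _ _) hn)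
      have hd := hN₄ n (le_trans (le_max_left _ _) hn)
      rw [hm] at hd ⊢
      rw [Real.dist_eq, sub_zero] at hd
      have habs : |m| < 1 := by exact_mod_cast hd
      have hm0 : m = 0 := by rwa [Int.abs_lt_one_iff] at habs
      rw [hm0]; simp
    have hrat : ∀ n, N₅ ≤ n → ∃ m : ℚ, s n = m := by
      intro n hn
      obtain ⟨m, hm⟩ := hint₂ n (le_trans (le_max_right _ _) hn)
      exact ⟨(m : ℚ), by rw [hm]; push_cast; rfl⟩
    obtain ⟨p, hp⟩ := poly_of_Dseq_zero K s N₅ hrat hzero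
    -- endgame
    set pR : Polynomial ℝ := p.map (algebraMap ℚ ℝ) with hpR
    set h : ℝ → ℝ := fun x => θ x - pR.eval x with hh
    have hanθ : AnalyticOnNhd ℝ θ (Set.Ioi a) := (isOpen_Ioi.analyticOn_iff_analyticOnNhd).mp hθ
    have hanp : AnalyticOnNhd ℝ (fun x => pR.eval x) (Set.Ioi a) := by
      have := AnalyticOnNhd.eval_polynomial (𝕜 := ℝ) (A := ℝ) pR
      exact this.mono (Set.subset_univ _)
    have hanh : AnalyticOnNhd ℝ h (Set.Ioi a) := hanθ.sub hanp
    obtain ⟨q, hqne, hqrel⟩ := halgθ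
    set u : Polynomial (Polynomial ℝ) := Polynomial.X + Polynomial.C pR with hu
    set Q' : Polynomial (Polynomial ℝ) := q.comp u with hQ'
    have hQ'ne : Q' ≠ 0 := by
      intro h0
      have hca : (Q'.comp (Polynomial.X - Polynomial.C pR)) = q := by
        rw [hQ', Polynomial.comp_assoc, hu]
        rw [Polynomial.add_comp, Polynomial.X_comp, Polynomial.C_comp]
        simp
      rw [h0, Polynomial.zero_comp] at hca
      exact hqne hca.symm
    have hQ'rel : AnnRel a h Q' := by
      intro x hx
      rw [hQ', Polynomial.eval₂_comp]
      have : Polynomial.eval₂ (Polynomial.evalRingHom x) (h x) u = θ x := by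
        rw [hu, Polynomial.eval₂_add, Polynomial.eval₂_X, Polynomial.eval₂_C, hh]
        simp
      rw [this]
      exact hqrel x hx
    have hN₅a : a < (N₅ : ℝ) := by
      calc a < (N₂ : ℝ) := hN₂a
        _ ≤ (N₅ : ℝ) := by exact_mod_cast le_max_right N₄ N₂
    have hzn : ∀ n : ℕ, N₅ ≤ n → h n = 0 := by
      intro n hn
      show θ (n:ℝ) - pR.eval (n:ℝ) = 0
      have h1 : s n = pR.eval (n:ℝ) := hp n hn
      have h2 : θ (n:ℝ) = s n := rfl
      rw [h2, h1, sub_self]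
    have heq := endgame a h hanh N₅ hN₅a hzn Q'.natDegree Q' le_rfl hQ'ne hQ'rel
    refine ⟨p, fun x hx => ?_⟩
    have h2 : h x = 0 := heq hx
    have h3 : θ x - pR.eval x = 0 := h2
    show θ x = pR.eval x
    linarith [h3]
  · -- eventually φ ≥ c > 0 : contradiction
    exfalso
    obtain ⟨c, hc, hev⟩ := hpos
    apply contra s hsb c hc
    obtain ⟨R, hR⟩ := Filter.eventually_atTop.mp hev
    rw [Filter.eventually_atTop]
    refine ⟨Nat.ceil R, fun n hn => ?_⟩
    have : c ≤ Dfun^[K] θ (n:ℝ) := hR (n:ℝ) (le_trans (Nat.le_ceil R) (by exact_mod_cast hn))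
    rwa [iter_cast K θ n] at this
  · -- eventually φ ≤ -c : contradiction with -s
    exfalso
    obtain ⟨c, hc, hev⟩ := hneg
    have hsb' : ∀ᶠ n in (atTop : Filter ℕ), |(fun n => -(s n)) n| ≤ C * (n:ℝ) ^ M := by
      filter_upwards [hsb] with n hn
      simpa [abs_neg] using hn
    apply contra (fun n => -(s n)) hsb' c hc
    obtain ⟨R, hR⟩ := Filter.eventually_atTop.mp hev
    rw [Filter.eventually_atTop]
    refine ⟨Nat.ceil R, fun n hn => ?_⟩
    have h1 : Dfun^[K] θ (n:ℝ) ≤ -c := hR (n:ℝ) (le_trans (Nat.le_ceil R) (by exact_mod_cast hn))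
    rw [iter_cast K θ n] at h1
    rw [Dseq_neg K s n]
    linarith [h1]

end AuxAlgebraicIntegerValued
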